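/- arXiv:2302.02686 — 2 statements merged into one kernel-verified Lean document; each statement's English description precedes it below -/
import Mathlib

section
/- Let G(E) be a well-formed TFG for (N1,m1) ▷_E (N2,m2). For a marking m2' of N2, define Inv(m2') = { c restricted to N1 : c total, well-defined configuration with c ≡ m2' }. Then the family { Inv(m2') : m2' ∈ R(N2,m2) } is a partition of R(N1,m1): each set is non-empty, the sets are pairwise disjoint, and their union equals R(N1,m1). -/
open Finset

/-- A Petri net over a type of places `P`. -/
structure PetriNet (P : Type) where
  Trans : Type
  pre : Trans → P → ℕ
  post : Trans → P → ℕ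

/-- Firing relation between markings. -/
def PetriNet.fire {P : Type} (N : PetriNet P) (m m' : P → ℕ) : Prop :=
  ∃ t : N.Trans, (∀ p, N.pre t p ≤ m p) ∧ ∀ p, m' p = m p - N.pre t p + N.post t p

/-- Reachability of a marking from an initial one. -/
def PetriNet.reach {P : Type} (N : PetriNet P) (m0 m : P → ℕ) : Prop :=
  Relation.ReflTransGen N.fire m0 m

/-- A marked net is safe (1-bounded) when every reachable marking has at most one token per place. -/
def PetriNet.Safe {P : Type} (N : PetriNet P) (m0 : P → ℕ) : Prop :=
  ∀ m, N.reach m0 m → ∀ p, m p ≤ 1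

/-- Two places are concurrent when some reachable marking marks both positively. -/
def PetriNet.ConcPlaces {P : Type} (N : PetriNet P) (m0 : P → ℕ) (p q : P) : Prop :=
  ∃ m, N.reach m0 m ∧ 0 < m p ∧ 0 < m q

/-- A Token Flow Graph: redundancy arcs `R`, agglomeration arcs `A` (disjoint from `R`,
enforced in well-formedness), and constant nodes given by `kval`. -/
structure TFG (V : Type) [DecidableEq V] where
  R : Finset (V × V)
  A : Finset (V × V)
  kval : V → Option ℕ

variable {V : Type} [DecidableEq V]

def TFG.Edge (G : TFG V) (v w : V) : Prop := (v, w) ∈ G.R ∨ (v, w) ∈ G.A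

/-- `G.Reach v w` means `v →* w`. -/
def TFG.Reach (G : TFG V) : V → V → Prop := Relation.ReflTransGen G.Edge

/-- Successor set `succ(v)` (includes `v` itself). -/
def TFG.succs (G : TFG V) (v : V) : Set V := {w | G.Reach v w}

/-- A root has no incoming arc. -/
def TFG.IsRoot (G : TFG V) (v : V) : Prop := ∀ w, ¬ G.Edge w v

/-- A ∘-leaf has no outgoing agglomeration arc. -/
def TFG.IsCircLeaf (G : TFG V) (v : V) : Prop := ∀ w, (v, w) ∉ G.A

/-- The set `X` such that `v ∘→ X` (agglomeration children of `v`). -/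
def TFG.aggChildren (G : TFG V) (v : V) : Finset V :=
  (G.A.filter (fun e => e.1 = v)).image Prod.snd

/-- The set `X` such that `X →• v` (redundancy parents of `v`). -/
def TFG.redParents (G : TFG V) (v : V) : Finset V :=
  (G.R.filter (fun e => e.2 = v)).image Prod.fst

/-- A configuration is a partial valuation of the nodes; it must agree with constant nodes. -/
def TFG.IsConfig (G : TFG V) (c : V → Option ℕ) : Prop :=
  ∀ v n, G.kval v = some n → c v = some n

/-- A configuration is total when it is defined on every node. -/
def TotalConf (c : V → Option ℕ) : Prop := ∀ v, c v ≠ none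

/-- Value of a configuration at a node (0 if undefined). -/
def cval (c : V → Option ℕ) (v : V) : ℕ := (c v).getD 0

/-- Well-definedness of a configuration: conditions (CBot) and (CEq). -/
def TFG.WellDef (G : TFG V) (c : V → Option ℕ) : Prop :=
  (∀ v w, G.Edge v w → (c v = none ↔ c w = none)) ∧
  (∀ v n, c v = some n →
    ((G.aggChildren v).Nonempty → n = ∑ w ∈ G.aggChildren v, cval c w) ∧
    ((G.redParents v).Nonempty → n = ∑ w ∈ G.redParents v, cval c w))

/-- A system of reduction equations: `(v, X)` stands for the equation `v = ∑_{w ∈ X} w`. -/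
abbrev EqSys (V : Type) := Finset (V × Finset V)

/-- A (non-negative integer) solution of the system `E`. -/
def Solves (E : EqSys V) (s : V → ℕ) : Prop :=
  ∀ e ∈ E, s e.1 = ∑ w ∈ e.2, s w

/-- `E, ⟦c⟧` is consistent: some solution of `E` extends the partial valuation `c`. -/
def ConsistentWith (E : EqSys V) (c : V → Option ℕ) : Prop :=
  ∃ s : V → ℕ, Solves E s ∧ ∀ v n, c v = some n → s v = n

/-- Variables occurring in `E`. -/
def fvars (E : EqSys V) : Set V := {v | ∃ e ∈ E, v = e.1 ∨ v ∈ e.2}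

/-- View a marking over the set of places `P` as a partial configuration over `V`. -/
def mconf (P : Set V) [DecidablePred (· ∈ P)] (m : ↥P → ℕ) : V → Option ℕ :=
  fun v => if h : v ∈ P then some (m ⟨v, h⟩) else none

/-- Restriction of a configuration to a set of places, seen as a marking. -/
def restrict (c : V → Option ℕ) (P : Set V) : ↥P → ℕ := fun p => cval c ↑p

/-- Compatibility `c ≡ m` of a configuration with a marking on `P`. -/
def CompatM (c : V → Option ℕ) (P : Set V) (m : ↥P → ℕ) : Prop :=
  ∀ p : ↥P, c ↑p = some (m p)

/-- A solution of `E` agrees with a marking on `P`. -/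
def AgreesOn (s : V → ℕ) (P : Set V) (m : ↥P → ℕ) : Prop := ∀ p : ↥P, s ↑p = m p

/-- `E`-equivalence `(N1,m1) ▷_E (N2,m2)`: conditions (A1), (A2), (A3). -/
structure EEquiv (E : EqSys V) (P1 P2 : Set V)
    (N1 : PetriNet ↥P1) (m1 : ↥P1 → ℕ) (N2 : PetriNet ↥P2) (m2 : ↥P2 → ℕ) : Prop where
  A1l : ∀ m, N1.reach m1 m → ∃ s, Solves E s ∧ AgreesOn s P1 m
  A1r : ∀ m, N2.reach m2 m → ∃ s, Solves E s ∧ AgreesOn s P2 m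
  A2 : ∃ s, Solves E s ∧ AgreesOn s P1 m1 ∧ AgreesOn s P2 m2
  A3 : ∀ m1' m2', (∃ s, Solves E s ∧ AgreesOn s P1 m1' ∧ AgreesOn s P2 m2') →
      (N1.reach m1 m1' ↔ N2.reach m2 m2')

/-- Well-formedness of a TFG for an equivalence statement: conditions (T1)–(T6). -/
structure WellFormed (G : TFG V) (E : EqSys V) (P1 P2 : Set V) : Prop where
  T1 : {v | G.kval v = none} = P1 ∪ P2 ∪ fvars E
  T2 : ∀ v, G.kval v ≠ none → G.IsRoot v
  T3a : ∀ p p' q, (p, q) ∈ G.A → G.Edge p' q → p' = p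
  T3b : ∀ p q, ¬((p, q) ∈ G.R ∧ (p, q) ∈ G.A)
  T4 : ∀ v X, ((X = G.aggChildren v ∨ X = G.redParents v) ∧ X.Nonempty) ↔ (v, X) ∈ E
  T5 : ∀ v, ¬ Relation.TransGen G.Edge v v
  T6root : ∀ v, G.kval v = none → (G.IsRoot v ↔ v ∈ P2)
  T6leaf : ∀ v, G.kval v = none → (G.IsCircLeaf v ↔ v ∈ P1)

/-- Node concurrency relation of the TFG: both nodes are positive in some
total, well-defined configuration whose restriction to `N2` is reachable. -/
def NodeConc (G : TFG V) (P2 : Set V) [DecidablePred (· ∈ P2)]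
    (N2 : PetriNet ↥P2) (m2 : ↥P2 → ℕ) (v w : V) : Prop :=
  ∃ c, G.IsConfig c ∧ TotalConf c ∧ G.WellDef c ∧ N2.reach m2 (restrict c P2) ∧
    0 < cval c v ∧ 0 < cval c w

/-! ### Auxiliary lemmas -/

section Aux

variable {G : TFG V} {E : EqSys V} {P1 P2 : Set V}

lemma mem_aggChildren {v w : V} : w ∈ G.aggChildren v ↔ (v, w) ∈ G.A := by
  constructor
  · intro h
    simp only [TFG.aggChildren, Finset.mem_image, Finset.mem_filter] at h
    obtain ⟨⟨a, b⟩, ⟨he, h1⟩, h2⟩ := h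
    simp only at h1 h2
    subst h1; subst h2; exact he
  · intro h
    simp only [TFG.aggChildren, Finset.mem_image, Finset.mem_filter]
    exact ⟨(v, w), ⟨h, rfl⟩, rfl⟩

lemma mem_redParents {v w : V} : w ∈ G.redParents v ↔ (w, v) ∈ G.R := by
  constructor
  · intro h
    simp only [TFG.redParents, Finset.mem_image, Finset.mem_filter] at h
    obtain ⟨⟨a, b⟩, ⟨he, h1⟩, h2⟩ := h
    simp only at h1 h2
    subst h1; subst h2; exact he
  · intro h
    simp only [TFG.redParents, Finset.mem_image, Finset.mem_filter]
    exact ⟨(w, v), ⟨h, rfl⟩, rfl⟩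

lemma kval_eq_none (hwf : WellFormed G E P1 P2) {v : V}
    (h : v ∈ P1 ∪ P2 ∪ fvars E) : G.kval v = none := by
  have h1 := hwf.T1
  rw [Set.ext_iff] at h1
  exact (h1 v).mpr h

lemma total_some {c : V → Option ℕ} {v : V} (h : c v ≠ none) :
    c v = some (cval c v) := by
  cases hc : c v with
  | none => exact absurd hc h
  | some n => simp [cval, hc]

/-- The value function of a total well-defined configuration solves `E`. -/
lemma solves_cval (hwf : WellFormed G E P1 P2) {c : V → Option ℕ}
    (htot : TotalConf c) (hwd : G.WellDef c) : Solves E (cval c) := by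
  rintro ⟨v, X⟩ he
  obtain ⟨hX, hne⟩ := (hwf.T4 v X).mpr he
  have hv : c v = some (cval c v) := total_some (htot v)
  have h2 := hwd.2 v _ hv
  rcases hX with h | h
  · subst h; exact h2.1 hne
  · subst h; exact h2.2 hne

/-- Extend a solution of `E` to a total configuration. -/
def cOf (G : TFG V) (s : V → ℕ) : V → Option ℕ :=
  fun v => some ((G.kval v).getD (s v))

lemma cOf_isConfig (G : TFG V) (s : V → ℕ) : G.IsConfig (cOf G s) := by
  intro v n h; simp [cOf, h]

lemma cOf_total (G : TFG V) (s : V → ℕ) : TotalConf (cOf G s) := by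
  intro v; simp [cOf]

lemma cOf_eq_of_none {s : V → ℕ} {v : V} (h : G.kval v = none) :
    cOf G s v = some (s v) := by simp [cOf, h]

lemma cval_cOf_of_none {s : V → ℕ} {v : V} (h : G.kval v = none) :
    cval (cOf G s) v = s v := by simp [cval, cOf, h]

lemma cOf_wellDef (hwf : WellFormed G E P1 P2) {s : V → ℕ} (hs : Solves E s) :
    G.WellDef (cOf G s) := by
  constructor
  · intro v w _; simp [cOf]
  · intro v n hn
    constructor
    · intro hne
      have hE : (v, G.aggChildren v) ∈ E := (hwf.T4 v _).mp ⟨Or.inl rfl, hne⟩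
      have hkv : G.kval v = none :=
        kval_eq_none hwf (Or.inr ⟨(v, G.aggChildren v), hE, Or.inl rfl⟩)
      have hn' : n = s v := by
        rw [cOf_eq_of_none hkv] at hn
        exact (Option.some_injective _ hn).symm
      rw [hn', hs _ hE]
      apply Finset.sum_congr rfl
      intro w hw
      have hkw : G.kval w = none :=
        kval_eq_none hwf (Or.inr ⟨(v, G.aggChildren v), hE, Or.inr hw⟩)
      rw [cval_cOf_of_none hkw]
    · intro hne
      have hE : (v, G.redParents v) ∈ E := (hwf.T4 v _).mp ⟨Or.inr rfl, hne⟩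
      have hkv : G.kval v = none :=
        kval_eq_none hwf (Or.inr ⟨(v, G.redParents v), hE, Or.inl rfl⟩)
      have hn' : n = s v := by
        rw [cOf_eq_of_none hkv] at hn
        exact (Option.some_injective _ hn).symm
      rw [hn', hs _ hE]
      apply Finset.sum_congr rfl
      intro w hw
      have hkw : G.kval w = none :=
        kval_eq_none hwf (Or.inr ⟨(v, G.redParents v), hE, Or.inr hw⟩)
      rw [cval_cOf_of_none hkw]

open Classical in
/-- Number of strict descendants of `v` that are targets of agglomeration arcs. -/
noncomputable def aggDepth (G : TFG V) (v : V) : ℕ :=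
  ((G.A.image Prod.snd).filter (fun w => Relation.TransGen G.Edge v w)).card

open Classical in
lemma aggDepth_lt (h5 : ∀ v, ¬ Relation.TransGen G.Edge v v)
    {v w : V} (h : (v, w) ∈ G.A) : aggDepth G w < aggDepth G v := by
  apply Finset.card_lt_card
  rw [Finset.ssubset_def]
  constructor
  · intro u hu
    rw [Finset.mem_filter] at hu ⊢
    exact ⟨hu.1, Relation.TransGen.head (Or.inr h) hu.2⟩
  · intro hsub
    have hw : w ∈ (G.A.image Prod.snd).filter (fun u => Relation.TransGen G.Edge v u) :=
      Finset.mem_filter.mpr ⟨Finset.mem_image.mpr ⟨(v, w), h, rfl⟩,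
        Relation.TransGen.single (Or.inr h)⟩
    have := hsub hw
    rw [Finset.mem_filter] at this
    exact h5 w this.2

/-- Unicity: a total well-defined configuration is determined by its restriction to `P1`. -/
lemma config_unique [DecidablePred (· ∈ P1)] (hwf : WellFormed G E P1 P2)
    {c c' : V → Option ℕ}
    (hc : G.IsConfig c) (htc : TotalConf c) (hwc : G.WellDef c)
    (hc' : G.IsConfig c') (htc' : TotalConf c') (hwc' : G.WellDef c')
    (hres : restrict c P1 = restrict c' P1) : ∀ v, c v = c' v := by
  have main : ∀ n v, aggDepth G v < n → c v = c' v := by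
    intro n
    induction n with
    | zero => intro v hv; exact absurd hv (Nat.not_lt_zero _)
    | succ n ih =>
      intro v hv
      cases hk : G.kval v with
      | some k => rw [hc v k hk, hc' v k hk]
      | none =>
        by_cases hP1 : v ∈ P1
        · have h1 : cval c v = cval c' v := congrFun hres ⟨v, hP1⟩
          rw [total_some (htc v), total_some (htc' v), h1]
        · have hleaf : ¬ G.IsCircLeaf v := fun hl => hP1 ((hwf.T6leaf v hk).mp hl)
          obtain ⟨w0, hw0⟩ : ∃ w, (v, w) ∈ G.A := by
            by_contra hno
            push_neg at hno
            exact hleaf (fun w => hno w)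
          have hne : (G.aggChildren v).Nonempty := ⟨w0, mem_aggChildren.mpr hw0⟩
          have e1 : c v = some (cval c v) := total_some (htc v)
          have e2 : c' v = some (cval c' v) := total_some (htc' v)
          have s1 := (hwc.2 v _ e1).1 hne
          have s2 := (hwc'.2 v _ e2).1 hne
          rw [e1, e2, s1, s2]
          congr 1
          apply Finset.sum_congr rfl
          intro w hw
          have hA := mem_aggChildren.mp hw
          have hcc : c w = c' w :=
            ih w (lt_of_lt_of_le (aggDepth_lt hwf.T5 hA) (Nat.lt_succ_iff.mp hv))
          simp [cval, hcc]
  intro v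
  exact main _ v (Nat.lt_succ_self _)

end Aux

theorem state_space_partition {V : Type} [DecidableEq V] (G : TFG V) (E : EqSys V)
    (P1 P2 : Set V) [DecidablePred (· ∈ P1)] [DecidablePred (· ∈ P2)]
    (N1 : PetriNet ↥P1) (m1 : ↥P1 → ℕ) (N2 : PetriNet ↥P2) (m2 : ↥P2 → ℕ)
    (hwf : WellFormed G E P1 P2) (heq : EEquiv E P1 P2 N1 m1 N2 m2) :
    (∀ m2' : ↥P2 → ℕ, N2.reach m2 m2' →
        ({m : ↥P1 → ℕ | ∃ c : V → Option ℕ, G.IsConfig c ∧ TotalConf c ∧ G.WellDef c ∧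
          CompatM c P2 m2' ∧ restrict c P1 = m}).Nonempty) ∧
    (∀ m2' m2'' : ↥P2 → ℕ, N2.reach m2 m2' → N2.reach m2 m2'' → m2' ≠ m2'' →
        {m : ↥P1 → ℕ | ∃ c : V → Option ℕ, G.IsConfig c ∧ TotalConf c ∧ G.WellDef c ∧
          CompatM c P2 m2' ∧ restrict c P1 = m} ∩
        {m : ↥P1 → ℕ | ∃ c : V → Option ℕ, G.IsConfig c ∧ TotalConf c ∧ G.WellDef c ∧
          CompatM c P2 m2'' ∧ restrict c P1 = m} = ∅) ∧
    (⋃ m2' ∈ {m : ↥P2 → ℕ | N2.reach m2 m},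
        {m : ↥P1 → ℕ | ∃ c : V → Option ℕ, G.IsConfig c ∧ TotalConf c ∧ G.WellDef c ∧
          CompatM c P2 m2' ∧ restrict c P1 = m}) = {m : ↥P1 → ℕ | N1.reach m1 m} := by
  have hP2none : ∀ p : ↥P2, G.kval ↑p = none := fun p =>
    kval_eq_none hwf (Or.inl (Or.inr p.2))
  have hP1none : ∀ p : ↥P1, G.kval ↑p = none := fun p =>
    kval_eq_none hwf (Or.inl (Or.inl p.2))
  refine ⟨?_, ?_, ?_⟩
  · -- Non-emptiness
    intro m2' h2
    obtain ⟨s, hs, hag⟩ := heq.A1r m2' h2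
    refine ⟨restrict (cOf G s) P1, cOf G s, cOf_isConfig G s, cOf_total G s,
      cOf_wellDef hwf hs, ?_, rfl⟩
    intro p
    rw [cOf_eq_of_none (hP2none p), hag p]
  · -- Pairwise disjointness
    intro m2' m2'' _ _ hne
    rw [Set.eq_empty_iff_forall_notMem]
    rintro m ⟨⟨c, hc1, hc2, hc3, hc4, hc5⟩, ⟨c', hc1', hc2', hc3', hc4', hc5'⟩⟩
    have huniq : ∀ v, c v = c' v :=
      config_unique hwf hc1 hc2 hc3 hc1' hc2' hc3' (hc5.trans hc5'.symm)
    apply hne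
    funext p
    have := (hc4 p).symm.trans ((huniq ↑p).trans (hc4' p))
    exact Option.some_injective _ this
  · -- Union equals reachability set of N1
    ext m
    simp only [Set.mem_iUnion, Set.mem_setOf_eq, exists_prop]
    constructor
    · rintro ⟨m2', h2, c, hc1, hc2, hc3, hc4, hc5⟩
      have hs : Solves E (cval c) := solves_cval hwf hc2 hc3
      have hag1 : AgreesOn (cval c) P1 m := by
        intro p
        exact congrFun hc5 p
      have hag2 : AgreesOn (cval c) P2 m2' := by
        intro p
        simp [cval, hc4 p]
      exact (heq.A3 m m2' ⟨cval c, hs, hag1, hag2⟩).mpr h2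
    · intro h1
      obtain ⟨s, hs, hag⟩ := heq.A1l m h1
      refine ⟨restrict (cOf G s) P2, ?_, cOf G s, cOf_isConfig G s, cOf_total G s,
        cOf_wellDef hwf hs, ?_, ?_⟩
      · have hag2 : AgreesOn s P2 (restrict (cOf G s) P2) := by
          intro p
          rw [_root_.restrict, cval_cOf_of_none (hP2none p)]
        exact (heq.A3 m _ ⟨s, hs, hag, hag2⟩).mp h1
      · intro p
        exact total_some (cOf_total G s ↑p)
      · funext p
        rw [_root_.restrict, cval_cOf_of_none (hP1none p), hag p]
end

section
/- Let G(E) be a well-formed TFG for (N1,m1) ▷_E (N2,m2). Define the concurrency relation C on nodes: v C w iff there exists a total, well-defined configuration c with the restriction of c to N2 reachable in (N2,m2), c(v) > 0 and c(w) > 0. If v C v and v →* w, then w C w and v C w. -/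
open Finset

variable {V : Type} [DecidableEq V]

section Aux

attribute [local instance] Classical.propDecidable

variable {V' : Type} [DecidableEq V']

lemma mem_redParents_s10 (G : TFG V') {p y : V'} : p ∈ G.redParents y ↔ (p, y) ∈ G.R := by
  unfold TFG.redParents
  simp only [Finset.mem_image, Finset.mem_filter, Prod.exists]
  constructor
  · rintro ⟨a, b, ⟨hm, hb⟩, ha⟩; subst hb; subst ha; exact hm
  · intro h; exact ⟨p, y, ⟨h, rfl⟩, rfl⟩

lemma mem_aggChildren_s10 (G : TFG V') {q y : V'} : y ∈ G.aggChildren q ↔ (q, y) ∈ G.A := by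
  unfold TFG.aggChildren
  simp only [Finset.mem_image, Finset.mem_filter, Prod.exists]
  constructor
  · rintro ⟨a, b, ⟨hm, hb⟩, ha⟩; subst hb; subst ha; exact hm
  · intro h; exact ⟨q, y, ⟨h, rfl⟩, rfl⟩

lemma edge_wf (G : TFG V') (h5 : ∀ v, ¬ Relation.TransGen G.Edge v v) :
    WellFounded (fun p y : V' => G.Edge p y) := by
  have hvert : ∀ {a b : V'}, G.Edge a b → a ∈ (G.R ∪ G.A).image Prod.fst := by
    intro a b h
    rcases h with h | h
    · exact Finset.mem_image.2 ⟨(a,b), Finset.mem_union_left _ h, rfl⟩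
    · exact Finset.mem_image.2 ⟨(a,b), Finset.mem_union_right _ h, rfl⟩
  set S := (G.R ∪ G.A).image Prod.fst with hS
  set μ : V' → ℕ := fun y => (S.filter (fun x => Relation.TransGen G.Edge x y)).card with hμ
  have key : ∀ {a b : V'}, G.Edge a b → μ a < μ b := by
    intro a b hab
    apply Finset.card_lt_card
    constructor
    · intro x hx
      rcases Finset.mem_filter.1 hx with ⟨hxS, hxt⟩
      exact Finset.mem_filter.2 ⟨hxS, hxt.tail hab⟩
    · intro hsub
      have ha : a ∈ S.filter (fun x => Relation.TransGen G.Edge x b) :=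
        Finset.mem_filter.2 ⟨hvert hab, Relation.TransGen.single hab⟩
      have := hsub ha
      exact h5 a (Finset.mem_filter.1 this).2
  exact Subrelation.wf (fun {a b} h => key h) (InvImage.wf μ Nat.lt_wfRel.wf)

/-- chosen agglomeration child -/
noncomputable def chc (G : TFG V') (q : V') : V' :=
  if h : (G.aggChildren q).Nonempty then h.choose else q

lemma chc_mem (G : TFG V') {q : V'} (h : (G.aggChildren q).Nonempty) :
    chc G q ∈ G.aggChildren q := by
  unfold chc; rw [dif_pos h]; exact h.choose_spec

/-- token propagation valuation -/
noncomputable def tprop (G : TFG V') (h5 : ∀ v, ¬ Relation.TransGen G.Edge v v)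
    (s0 : V' → ℕ) (v w : V') : V' → ℕ :=
  (edge_wf G h5).fix (fun y rec =>
    if hreg : G.Reach v y ∧ y ≠ v then
      if hrp : (G.redParents y).Nonempty then
        ∑ p ∈ (G.redParents y).attach, rec p.1 (Or.inl ((mem_redParents_s10 G).mp p.2))
      else if hA : ∃ q, (q, y) ∈ G.A then
        if hA.choose = v then (if y = w then s0 v else 0)
        else if y = chc G hA.choose then rec hA.choose (Or.inr hA.choose_spec) else 0
      else 0
    else s0 y)

lemma tprop_eq (G : TFG V') (h5 : ∀ v, ¬ Relation.TransGen G.Edge v v)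
    (s0 : V' → ℕ) (v w y : V') :
    tprop G h5 s0 v w y =
    (if hreg : G.Reach v y ∧ y ≠ v then
      if hrp : (G.redParents y).Nonempty then
        ∑ p ∈ (G.redParents y).attach, tprop G h5 s0 v w p.1
      else if hA : ∃ q, (q, y) ∈ G.A then
        if hA.choose = v then (if y = w then s0 v else 0)
        else if y = chc G hA.choose then tprop G h5 s0 v w hA.choose else 0
      else 0
    else s0 y) := by
  conv_lhs => rw [tprop, WellFounded.fix_eq]
  rfl

lemma tprop_not_region (G : TFG V') (h5 : ∀ v, ¬ Relation.TransGen G.Edge v v)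
    (s0 : V' → ℕ) (v w : V') {y : V'} (h : ¬ (G.Reach v y ∧ y ≠ v)) :
    tprop G h5 s0 v w y = s0 y := by
  rw [tprop_eq, dif_neg h]

lemma tprop_red (G : TFG V') (h5 : ∀ v, ¬ Relation.TransGen G.Edge v v)
    (s0 : V' → ℕ) (v w : V') {y : V'} (hreg : G.Reach v y ∧ y ≠ v)
    (hrp : (G.redParents y).Nonempty) :
    tprop G h5 s0 v w y = ∑ p ∈ G.redParents y, tprop G h5 s0 v w p := by
  rw [tprop_eq, dif_pos hreg, dif_pos hrp]
  exact Finset.sum_attach _ _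

lemma tprop_agg (G : TFG V') (h5 : ∀ v, ¬ Relation.TransGen G.Edge v v)
    (s0 : V' → ℕ) (v w : V') {y q : V'} (hreg : G.Reach v y ∧ y ≠ v)
    (hrp : ¬ (G.redParents y).Nonempty) (hq : (q, y) ∈ G.A)
    (hT3a : ∀ p p' q', (p, q') ∈ G.A → G.Edge p' q' → p' = p) :
    tprop G h5 s0 v w y =
      if q = v then (if y = w then s0 v else 0)
      else if y = chc G q then tprop G h5 s0 v w q else 0 := by
  rw [tprop_eq, dif_pos hreg, dif_neg hrp]
  have hA : ∃ p, (p, y) ∈ G.A := ⟨q, hq⟩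
  rw [dif_pos hA]
  have hch : hA.choose = q := hT3a q hA.choose y hq (Or.inr hA.choose_spec)
  rw [hch]

end Aux

section Main

variable {V : Type} [DecidableEq V]

lemma step_lemma (G : TFG V) (E : EqSys V) (P1 P2 : Set V)
    (hwf : WellFormed G E P1 P2) (c : V → Option ℕ)
    (hc : G.IsConfig c) (ht : TotalConf c) (hwd : G.WellDef c)
    {v w : V} (hvw : G.Edge v w) (hpos : 0 < cval c v) :
    ∃ c' : V → Option ℕ, G.IsConfig c' ∧ TotalConf c' ∧ G.WellDef c' ∧
      (∀ y, ¬ (G.Reach v y ∧ y ≠ v) → c' y = c y) ∧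
      0 < cval c' v ∧ 0 < cval c' w := by
  have h5 := hwf.T5
  have hsome : ∀ z, c z = some (cval c z) := by
    intro z
    rcases hz : c z with _ | n
    · exact absurd hz (ht z)
    · simp [cval, hz]
  rcases hvw with hR | hA
  · -- redundancy edge : nothing to change
    refine ⟨c, hc, ht, hwd, fun y _ => rfl, hpos, ?_⟩
    have hmem : v ∈ G.redParents w := (mem_redParents_s10 G).2 hR
    have heqn := (hwd.2 w (cval c w) (hsome w)).2 ⟨v, hmem⟩
    have : cval c v ≤ cval c w := by
      rw [heqn]
      exact Finset.single_le_sum (fun i _ => Nat.zero_le _) hmem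
    omega
  · -- agglomeration edge : redistribute
    set s0 : V → ℕ := cval c with hs0
    -- preliminary facts
    have hrpA : ∀ q y, (q, y) ∈ G.A → ¬ (G.redParents y).Nonempty := by
      rintro q y hqy ⟨p, hp⟩
      have hpr := (mem_redParents_s10 G).1 hp
      have hpq : p = q := hwf.T3a q p y hqy (Or.inl hpr)
      subst hpq
      exact hwf.T3b p y ⟨hpr, hqy⟩
    have hreg_edge : ∀ y, (G.Reach v y ∧ y ≠ v) → ∃ p, G.Reach v p ∧ G.Edge p y := by
      rintro y ⟨hr, hne⟩
      rcases hr.cases_tail with h | ⟨p, hp, he⟩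
      · exact absurd h hne
      · exact ⟨p, hp, he⟩
    have hwv : w ≠ v := by
      intro h; subst h
      exact h5 w (Relation.TransGen.single (Or.inr hA))
    have hregw : G.Reach v w ∧ w ≠ v :=
      ⟨Relation.ReflTransGen.single (Or.inr hA), hwv⟩
    have htv : (tprop G h5 s0 v w) v = s0 v := tprop_not_region G h5 s0 v w (by simp)
    have htw : (tprop G h5 s0 v w) w = s0 v := by
      rw [tprop_agg G h5 s0 v w hregw (hrpA v w hA) hA hwf.T3a]
      simp
    refine ⟨fun y => some ((tprop G h5 s0 v w) y), ?_, ?_, ?_, ?_, ?_, ?_⟩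
    · -- IsConfig
      intro y n hkn
      have hnr : ¬ (G.Reach v y ∧ y ≠ v) := by
        intro hy
        obtain ⟨p, _, he⟩ := hreg_edge y hy
        exact hwf.T2 y (by rw [hkn]; simp) p he
      have h1 : tprop G h5 s0 v w y = s0 y := tprop_not_region G h5 s0 v w hnr
      have h3 : s0 y = n := by
        rw [hs0]; simp [cval, hc y n hkn]
      show some (tprop G h5 s0 v w y) = some n
      rw [h1, h3]
    · -- TotalConf
      intro y; simp
    · -- WellDef
      constructor
      · intro a b _; simp
      · intro y n hn
        have hny : n = (tprop G h5 s0 v w) y := (Option.some.inj hn).symm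
        subst hny
        constructor
        · -- agglomeration equation
          intro hne
          simp only [cval, Option.getD_some]
          by_cases hry : G.Reach v y ∧ y ≠ v
          · have hch : ∀ z ∈ G.aggChildren y, (tprop G h5 s0 v w) z = if z = chc G y then (tprop G h5 s0 v w) y else 0 := by
              intro z hz
              have hzy := (mem_aggChildren_s10 G).1 hz
              have hzreg : G.Reach v z ∧ z ≠ v := by
                refine ⟨hry.1.tail (Or.inr hzy), ?_⟩
                intro h; subst h
                exact h5 z (Relation.TransGen.tail' hry.1 (Or.inr hzy))
              rw [tprop_agg G h5 s0 v w hzreg (hrpA y z hzy) hzy hwf.T3a,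
                if_neg hry.2]
            rw [Finset.sum_congr rfl hch, Finset.sum_ite_eq' (G.aggChildren y)
              (chc G y) (fun _ => (tprop G h5 s0 v w) y), if_pos (chc_mem G hne)]
          · by_cases hyv : y = v
            · subst hyv
              have hch : ∀ z ∈ G.aggChildren y, (tprop G h5 s0 y w) z = if z = w then s0 y else 0 := by
                intro z hz
                have hzy := (mem_aggChildren_s10 G).1 hz
                have hzv : z ≠ y := by
                  intro h; subst h
                  exact h5 z (Relation.TransGen.single (Or.inr hzy))
                have hzreg : G.Reach y z ∧ z ≠ y :=
                  ⟨Relation.ReflTransGen.single (Or.inr hzy), hzv⟩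
                rw [tprop_agg G h5 s0 y w hzreg (hrpA y z hzy) hzy hwf.T3a,
                  if_pos rfl]
              rw [Finset.sum_congr rfl hch, Finset.sum_ite_eq' (G.aggChildren y)
                w (fun _ => s0 y), if_pos ((mem_aggChildren_s10 G).2 hA), htv]
            · have hnr : ¬ G.Reach v y := fun h => hry ⟨h, hyv⟩
              have hch : ∀ z ∈ G.aggChildren y, (tprop G h5 s0 v w) z = s0 z := by
                intro z hz
                have hzy := (mem_aggChildren_s10 G).1 hz
                refine tprop_not_region G h5 s0 v w ?_
                rintro ⟨hrz, hzv⟩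
                obtain ⟨p, hp, he⟩ := hreg_edge z ⟨hrz, hzv⟩
                have : p = y := hwf.T3a y p z hzy he
                subst this
                exact hnr hp
              have hty : (tprop G h5 s0 v w) y = s0 y := tprop_not_region G h5 s0 v w (fun h => hry h)
              have heqn := (hwd.2 y (s0 y) (hsome y)).1 hne
              rw [hty, Finset.sum_congr rfl hch, heqn]
        · -- redundancy equation
          intro hne
          simp only [cval, Option.getD_some]
          by_cases hry : G.Reach v y ∧ y ≠ v
          · exact tprop_red G h5 s0 v w hry hne
          · have hch : ∀ p ∈ G.redParents y, (tprop G h5 s0 v w) p = s0 p := by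
              intro p hp
              have hpr := (mem_redParents_s10 G).1 hp
              refine tprop_not_region G h5 s0 v w ?_
              rintro ⟨hrp', hpv⟩
              by_cases hyv : y = v
              · subst hyv
                exact h5 y (Relation.TransGen.tail' hrp' (Or.inl hpr))
              · exact hry ⟨hrp'.tail (Or.inl hpr), hyv⟩
            have hty : (tprop G h5 s0 v w) y = s0 y := tprop_not_region G h5 s0 v w (fun h => hry h)
            have heqn := (hwd.2 y (s0 y) (hsome y)).2 hne
            rw [hty, Finset.sum_congr rfl hch, heqn]
    · -- unchanged outside the region
      intro y hy
      show some (tprop G h5 s0 v w y) = c y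
      rw [tprop_not_region G h5 s0 v w hy]
      exact (hsome y).symm
    · -- positive at v
      simpa [cval, htv] using hpos
    · -- positive at w
      simpa [cval, htw] using hpos

lemma propagate_reach (G : TFG V) (E : EqSys V) (P1 P2 : Set V)
    (hwf : WellFormed G E P1 P2) {v w : V} (hvw : G.Reach v w) :
    ∀ c : V → Option ℕ, G.IsConfig c → TotalConf c → G.WellDef c → 0 < cval c v →
    ∃ c' : V → Option ℕ, G.IsConfig c' ∧ TotalConf c' ∧ G.WellDef c' ∧
      (∀ y, ¬ (G.Reach v y ∧ y ≠ v) → c' y = c y) ∧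
      0 < cval c' v ∧ 0 < cval c' w := by
  induction hvw using Relation.ReflTransGen.head_induction_on with
  | refl =>
    intro c hc ht hwd hpos
    exact ⟨c, hc, ht, hwd, fun y _ => rfl, hpos, hpos⟩
  | head hab hbw ih =>
    rename_i a b
    intro c hc ht hwd hpos
    obtain ⟨c1, hc1, ht1, hwd1, hun1, hpa1, hpb1⟩ :=
      step_lemma G E P1 P2 hwf c hc ht hwd hab hpos
    obtain ⟨c2, hc2, ht2, hwd2, hun2, hpb2, hpw2⟩ :=
      ih c1 hc1 ht1 hwd1 hpb1
    have hanb : a ≠ b := by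
      intro h; subst h
      exact hwf.T5 a (Relation.TransGen.single hab)
    have hnra : ¬ G.Reach b a := by
      intro h
      exact hwf.T5 a (Relation.TransGen.head' hab h)
    have hc2a : c2 a = c1 a := hun2 a (by rintro ⟨h, _⟩; exact hnra h)
    refine ⟨c2, hc2, ht2, hwd2, ?_, ?_, hpw2⟩
    · intro y hy
      by_cases hyb : y = b
      · subst hyb
        exfalso
        exact hy ⟨Relation.ReflTransGen.single hab, fun h => hanb h.symm⟩
      · have h2 : c2 y = c1 y := by
          apply hun2
          rintro ⟨hr, hne⟩
          exact hy ⟨Relation.ReflTransGen.head hab hr, by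
            intro h; subst h
            exact hwf.T5 b (Relation.TransGen.tail' hr hab)⟩
        rw [h2]
        exact hun1 y hy
    · have : cval c2 a = cval c1 a := by rw [cval, hc2a]; rfl
      rw [this]; exact hpa1

end Main

theorem nondead_propagation {V : Type} [DecidableEq V] (G : TFG V) (E : EqSys V)
    (P1 P2 : Set V) [DecidablePred (· ∈ P1)] [DecidablePred (· ∈ P2)]
    (N1 : PetriNet ↥P1) (m1 : ↥P1 → ℕ) (N2 : PetriNet ↥P2) (m2 : ↥P2 → ℕ)
    (hwf : WellFormed G E P1 P2) (heq : EEquiv E P1 P2 N1 m1 N2 m2)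
    (v w : V) (hv : NodeConc G P2 N2 m2 v v) (hvw : G.Reach v w) :
    NodeConc G P2 N2 m2 w w ∧ NodeConc G P2 N2 m2 v w := by
  obtain ⟨c, hc, ht, hwd, hreach, hpv, _⟩ := hv
  obtain ⟨c', hc', ht', hwd', hun, hpv', hpw'⟩ :=
    propagate_reach G E P1 P2 hwf hvw c hc ht hwd hpv
  have hres : _root_.restrict c' P2 = _root_.restrict c P2 := by
    funext p
    have hkp : G.kval (p : V) = none := by
      have : (p : V) ∈ {v | G.kval v = none} := by
        rw [hwf.T1]
        exact Or.inl (Or.inr p.2)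
      exact this
    have hroot : G.IsRoot (p : V) := (hwf.T6root (p : V) hkp).2 p.2
    have hcp : c' (p : V) = c (p : V) := by
      apply hun
      rintro ⟨hr, hne⟩
      rcases hr.cases_tail with h | ⟨q, _, he⟩
      · exact hne h
      · exact hroot q he
    simp [_root_.restrict, cval, hcp]
  have hreach' : N2.reach m2 (_root_.restrict c' P2) := by rw [hres]; exact hreach
  exact ⟨⟨c', hc', ht', hwd', hreach', hpw', hpw'⟩,
         ⟨c', hc', ht', hwd', hreach', hpv', hpw'⟩⟩
end
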